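/- Let f: T_m → ℝ be bounded and u*_f its convex envelope (largest convex function ≤ f). On the coincidence set CS(f) = {x : f(x) = u*_f(x)}, f satisfies f(x) ≤ min{ min over distinct successors y,z of (f(y)+f(z))/2 ; min over successors y of (f(x̂)+m·f(y))/(m+1) }, while outside CS(f) the envelope satisfies the equation with equality: u*_f(x) = min{ min over distinct successors y,z of (u*_f(y)+u*_f(z))/2 ; min over successors y of (u*_f(x̂)+m·u*_f(y))/(m+1) }. -/
import Mathlib


open Filter Finset

/-- Vertices of the regular `m`-branching tree: finite sequences in `Fin m`
(root-first; the root is `[]`, successors of `x` are `x ++ [i]`). -/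
abbrev V (m : ℕ) := List (Fin m)

variable {m : ℕ}

/-- Distance from the root to `x`: sum of edge lengths `1/m^k`. -/
noncomputable def hgt (x : V m) : ℝ :=
  ∑ k ∈ Finset.range x.length, (1 : ℝ) / (m : ℝ) ^ (k + 1)

/-- Longest common prefix (the common ancestor of two vertices). -/
def lcp : V m → V m → V m
  | a :: x, b :: y => if a = b then a :: lcp x y else []
  | _, _ => []

/-- Path distance on the tree. -/
noncomputable def treeDist (x y : V m) : ℝ := hgt x + hgt y - 2 * hgt (lcp x y)

/-- `z` lies on the minimal path `[x,y]`. -/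
def OnPath (z x y : V m) : Prop := lcp x y <+: z ∧ (z <+: x ∨ z <+: y)

/-- Path-distance convexity on the tree. -/
def ConvexT (u : V m → ℝ) : Prop :=
  ∀ x y z : V m, x ≠ y → OnPath z x y →
    u z ≤ treeDist y z / treeDist x y * u x + treeDist x z / treeDist x y * u y

/-- The local characterization of convexity. -/
def LocConvex (u : V m → ℝ) : Prop :=
  ∀ x : V m,
    (∀ i j : Fin m, i ≠ j → u x ≤ (u (x ++ [i]) + u (x ++ [j])) / 2) ∧
    (x ≠ [] → ∀ i : Fin m,
      u x ≤ (u x.dropLast + (m : ℝ) * u (x ++ [i])) / ((m : ℝ) + 1))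

/-- Minimum over pairs of distinct successors of the averages. -/
noncomputable def binMin (u : V m → ℝ) (x : V m) : ℝ :=
  sInf {r | ∃ i j : Fin m, i ≠ j ∧ r = (u (x ++ [i]) + u (x ++ [j])) / 2}

/-- The operator governing the convex envelope (predecessor term omitted at the root). -/
noncomputable def opMin (u : V m → ℝ) (x : V m) : ℝ :=
  if x = [] then binMin u x
  else min (binMin u x)
    (sInf {r | ∃ i : Fin m,
      r = (u x.dropLast + (m : ℝ) * u (x ++ [i])) / ((m : ℝ) + 1)})

/-- The `k`-th vertex along a branch `π`. -/
def bvert (π : ℕ → Fin m) (k : ℕ) : V m := List.ofFn (fun i : Fin k => π i)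

/-- The boundary point in `[0,1]` associated to a branch. -/
noncomputable def psiB (m : ℕ) (π : ℕ → Fin m) : ℝ :=
  ∑' k : ℕ, (π k : ℝ) / (m : ℝ) ^ (k + 1)

/-- The point of `[0,1]` associated to a vertex. -/
noncomputable def psiV (x : V m) : ℝ :=
  ∑ k : Fin x.length, (x.get k : ℝ) / (m : ℝ) ^ ((k : ℕ) + 1)

/-- The successors of `y` that belong to `B`. -/
def succIn (B : Finset (V m)) (y : V m) : Finset (V m) :=
  B.filter (fun z => ∃ i : Fin m, z = y ++ [i])

/-- A finite binary subtree rooted at `x`. -/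
def IsBinSub (x : V m) (B : Finset (V m)) : Prop :=
  x ∈ B ∧ (succIn B x).card = 2 ∧
    ∀ y ∈ B, y ≠ x →
      x.length < y.length ∧ ((succIn B y).card = 0 ∨ (succIn B y).card = 2)

/-- The endpoints of `B`. -/
def Endpts (B : Finset (V m)) : Finset (V m) :=
  B.filter (fun y => (succIn B y).card = 0)

/-- Binary convexity. -/
def BinConvex (u : V m → ℝ) : Prop :=
  ∀ (x : V m) (B : Finset (V m)), IsBinSub x B →
    u x ≤ ∑ y ∈ Endpts B, (1 : ℝ) / 2 ^ (y.length - x.length) * u y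

/-- The local characterization of binary convexity. -/
def LocBinConvex (u : V m → ℝ) : Prop :=
  ∀ (x : V m) (i j : Fin m), i ≠ j → u x ≤ (u (x ++ [i]) + u (x ++ [j])) / 2

/-- Convex envelope of a boundary datum `g` (path-convexity version). -/
noncomputable def uStar (m : ℕ) (g : ℝ → ℝ) (x : V m) : ℝ :=
  sSup {r | ∃ u : V m → ℝ, ConvexT u ∧
    (∀ π : ℕ → Fin m,
      Filter.limsup (fun k => u (bvert π k)) Filter.atTop ≤ g (psiB m π)) ∧
    r = u x}

/-- Convex envelope of a boundary datum `g` (local characterization version). -/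
noncomputable def uStarL (m : ℕ) (g : ℝ → ℝ) (x : V m) : ℝ :=
  sSup {r | ∃ u : V m → ℝ, LocConvex u ∧
    (∀ π : ℕ → Fin m,
      Filter.limsup (fun k => u (bvert π k)) Filter.atTop ≤ g (psiB m π)) ∧
    r = u x}

/-- Convex envelope of an obstacle `f` defined on the tree. -/
noncomputable def envF (f : V m → ℝ) (x : V m) : ℝ :=
  sSup {r | ∃ u : V m → ℝ, LocConvex u ∧ (∀ z, u z ≤ f z) ∧ r = u x}

/-- Binary convex envelope of a boundary datum `g`. -/
noncomputable def bEnv (m : ℕ) (g : ℝ → ℝ) (x : V m) : ℝ :=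
  sSup {r | ∃ u : V m → ℝ, LocBinConvex u ∧
    (∀ π : ℕ → Fin m,
      Filter.limsup (fun k => u (bvert π k)) Filter.atTop ≤ g (psiB m π)) ∧
    r = u x}

section Aux
variable {m : ℕ}

lemma succ_ne' (x : V m) (i : Fin m) : x ++ [i] ≠ x := by
  intro h
  have := congrArg List.length h
  simp at this

lemma dropLast_ne' {x : V m} (hx : x ≠ []) : x.dropLast ≠ x := by
  intro h
  have h1 := congrArg List.length h
  rw [List.length_dropLast] at h1
  have : 0 < x.length := List.length_pos_iff.mpr hx
  omega

lemma locConvex_const (c : ℝ) : LocConvex (m := m) (fun _ => c) := by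
  intro x
  refine ⟨fun i j _ => by norm_num, fun _ i => ?_⟩
  rw [le_div_iff₀ (by positivity)]
  ring_nf
  linarith [le_refl (c * m)]

lemma envF_bddAbove (f : V m → ℝ) (x : V m) :
    BddAbove {r | ∃ u : V m → ℝ, LocConvex u ∧ (∀ z, u z ≤ f z) ∧ r = u x} := by
  refine ⟨f x, ?_⟩
  rintro r ⟨u, _, hle, rfl⟩
  exact hle x

lemma envF_nonempty {f : V m → ℝ} {C : ℝ} (hC : ∀ z : V m, |f z| ≤ C) (x : V m) :
    Set.Nonempty {r | ∃ u : V m → ℝ, LocConvex u ∧ (∀ z, u z ≤ f z) ∧ r = u x} :=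
  ⟨-C, fun _ => -C, locConvex_const _, fun z => (abs_le.mp (hC z)).1, rfl⟩

lemma le_envF {f u : V m → ℝ} (hu : LocConvex u) (hle : ∀ z, u z ≤ f z) (x : V m) :
    u x ≤ envF f x :=
  le_csSup (envF_bddAbove f x) ⟨u, hu, hle, rfl⟩

lemma envF_le {f : V m → ℝ} {C : ℝ} (hC : ∀ z : V m, |f z| ≤ C) (x : V m) :
    envF f x ≤ f x := by
  refine csSup_le (envF_nonempty hC x) ?_
  rintro r ⟨u, _, hle, rfl⟩
  exact hle x

lemma locConvex_envF {f : V m → ℝ} {C : ℝ} (hC : ∀ z : V m, |f z| ≤ C) :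
    LocConvex (envF f) := by
  intro x
  constructor
  · intro i j hij
    refine csSup_le (envF_nonempty hC x) ?_
    rintro r ⟨u, hu, hle, rfl⟩
    refine ((hu x).1 i j hij).trans ?_
    have h1 := le_envF hu hle (x ++ [i])
    have h2 := le_envF hu hle (x ++ [j])
    gcongr
  · intro hx i
    refine csSup_le (envF_nonempty hC x) ?_
    rintro r ⟨u, hu, hle, rfl⟩
    refine ((hu x).2 hx i).trans ?_
    have h1 := le_envF hu hle x.dropLast
    have h2 := le_envF hu hle (x ++ [i])
    have hm0 : (0:ℝ) ≤ (m:ℝ) := Nat.cast_nonneg m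
    gcongr

lemma binSet_bddBelow (u : V m → ℝ) (x : V m) :
    BddBelow {r | ∃ i j : Fin m, i ≠ j ∧ r = (u (x ++ [i]) + u (x ++ [j])) / 2} := by
  refine BddBelow.mono ?_
    (Set.finite_range (fun p : Fin m × Fin m =>
      (u (x ++ [p.1]) + u (x ++ [p.2])) / 2)).bddBelow
  rintro r ⟨i, j, _, rfl⟩
  exact ⟨(i, j), rfl⟩

lemma predSet_bddBelow (u : V m → ℝ) (x : V m) :
    BddBelow {r | ∃ i : Fin m,
      r = (u x.dropLast + (m : ℝ) * u (x ++ [i])) / ((m : ℝ) + 1)} := by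
  refine BddBelow.mono ?_
    (Set.finite_range (fun i : Fin m =>
      (u x.dropLast + (m : ℝ) * u (x ++ [i])) / ((m : ℝ) + 1))).bddBelow
  rintro r ⟨i, rfl⟩
  exact ⟨i, rfl⟩

lemma binSet_nonempty (hm : 2 ≤ m) (u : V m → ℝ) (x : V m) :
    Set.Nonempty {r | ∃ i j : Fin m, i ≠ j ∧ r = (u (x ++ [i]) + u (x ++ [j])) / 2} := by
  refine ⟨_, ⟨0, by omega⟩, ⟨1, by omega⟩, ?_, rfl⟩
  simp [Fin.ext_iff]

lemma predSet_nonempty (hm : 2 ≤ m) (u : V m → ℝ) (x : V m) :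
    Set.Nonempty {r | ∃ i : Fin m,
      r = (u x.dropLast + (m : ℝ) * u (x ++ [i])) / ((m : ℝ) + 1)} :=
  ⟨_, ⟨0, by omega⟩, rfl⟩

lemma le_opMin_of (hm : 2 ≤ m) {u : V m → ℝ} {c : ℝ} {x : V m}
    (h1 : ∀ i j : Fin m, i ≠ j → c ≤ (u (x ++ [i]) + u (x ++ [j])) / 2)
    (h2 : x ≠ [] → ∀ i : Fin m,
      c ≤ (u x.dropLast + (m : ℝ) * u (x ++ [i])) / ((m : ℝ) + 1)) :
    c ≤ opMin u x := by
  have hbin : c ≤ binMin u x := by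
    refine le_csInf (binSet_nonempty hm u x) ?_
    rintro r ⟨i, j, hij, rfl⟩
    exact h1 i j hij
  unfold opMin
  split
  · exact hbin
  · next hx =>
    refine le_min hbin (le_csInf (predSet_nonempty hm u x) ?_)
    rintro r ⟨i, rfl⟩
    exact h2 hx i

lemma opMin_le_bin {u : V m → ℝ} {x : V m} (i j : Fin m) (hij : i ≠ j) :
    opMin u x ≤ (u (x ++ [i]) + u (x ++ [j])) / 2 := by
  have hb : binMin u x ≤ _ := csInf_le (binSet_bddBelow u x) ⟨i, j, hij, rfl⟩
  unfold opMin
  split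
  · exact hb
  · exact (min_le_left _ _).trans hb

lemma opMin_le_pred {u : V m → ℝ} {x : V m} (hx : x ≠ []) (i : Fin m) :
    opMin u x ≤ (u x.dropLast + (m : ℝ) * u (x ++ [i])) / ((m : ℝ) + 1) := by
  unfold opMin
  rw [if_neg hx]
  exact (min_le_right _ _).trans (csInf_le (predSet_bddBelow u x) ⟨i, rfl⟩)

end Aux
/-- on the coincidence set `f` satisfies the inequality; off it,
the envelope satisfies the equation with equality. -/
theorem stmt12 (m : ℕ) (hm : 2 ≤ m) (f : V m → ℝ)
    (hf : ∃ C : ℝ, ∀ x : V m, |f x| ≤ C) :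
    ∀ x : V m,
      (f x = envF f x → f x ≤ opMin f x) ∧
      (f x ≠ envF f x → envF f x = opMin (envF f) x) := by
  obtain ⟨C, hC⟩ := hf
  have hE : LocConvex (envF f) := locConvex_envF hC
  intro x
  constructor
  · -- coincidence set
    intro hfe
    refine le_opMin_of hm (fun i j hij => ?_) (fun hx i => ?_)
    · calc f x = envF f x := hfe
        _ ≤ (envF f (x ++ [i]) + envF f (x ++ [j])) / 2 := (hE x).1 i j hij
        _ ≤ (f (x ++ [i]) + f (x ++ [j])) / 2 := by
            have h1 := envF_le hC (x ++ [i])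
            have h2 := envF_le hC (x ++ [j])
            gcongr
    · have hm0 : (0:ℝ) ≤ (m:ℝ) := Nat.cast_nonneg m
      calc f x = envF f x := hfe
        _ ≤ (envF f x.dropLast + (m:ℝ) * envF f (x ++ [i])) / ((m:ℝ) + 1) :=
            (hE x).2 hx i
        _ ≤ (f x.dropLast + (m:ℝ) * f (x ++ [i])) / ((m:ℝ) + 1) := by
            have h1 := envF_le hC x.dropLast
            have h2 := envF_le hC (x ++ [i])
            gcongr
  · -- off the coincidence set
    intro hne
    have hle : envF f x ≤ opMin (envF f) x :=
      le_opMin_of hm (fun i j hij => (hE x).1 i j hij) (fun hx i => (hE x).2 hx i)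
    refine le_antisymm hle ?_
    by_contra hlt'
    have hlt : envF f x < opMin (envF f) x := lt_of_le_of_ne hle (fun h => hlt' h.ge)
    have hfx : envF f x < f x := lt_of_le_of_ne (envF_le hC x) (fun h => hne h.symm)
    set c : ℝ := min (f x) (opMin (envF f) x) with hc
    have hcgt : envF f x < c := lt_min hfx hlt
    set v : V m → ℝ := fun y => if y = x then c else envF f y with hv
    have hvge : ∀ z, envF f z ≤ v z := by
      intro z
      by_cases hz : z = x
      · subst hz; simp only [hv, if_pos rfl]; exact hcgt.le
      · simp only [hv, if_neg hz]; exact le_refl _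
    have hvle : ∀ z, v z ≤ f z := by
      intro z
      by_cases hz : z = x
      · subst hz; simp only [hv, if_pos rfl]; exact min_le_left _ _
      · simp only [hv, if_neg hz]; exact envF_le hC z
    have hm0 : (0:ℝ) ≤ (m:ℝ) := Nat.cast_nonneg m
    have hvconv : LocConvex v := by
      intro y
      constructor
      · intro i j hij
        have hgc : (envF f (y ++ [i]) + envF f (y ++ [j])) / 2
            ≤ (v (y ++ [i]) + v (y ++ [j])) / 2 := by
          have h1 := hvge (y ++ [i]); have h2 := hvge (y ++ [j]); gcongr
        by_cases hy : y = x
        · rw [hy, show v x = c from if_pos rfl]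
          exact ((min_le_right (f x) _).trans (opMin_le_bin i j hij)).trans
            (hy ▸ hgc)
        · have : v y = envF f y := if_neg hy
          rw [this]
          exact ((hE y).1 i j hij).trans hgc
      · intro hy0 i
        have hgc : (envF f y.dropLast + (m:ℝ) * envF f (y ++ [i])) / ((m:ℝ) + 1)
            ≤ (v y.dropLast + (m:ℝ) * v (y ++ [i])) / ((m:ℝ) + 1) := by
          have h1 := hvge y.dropLast; have h2 := hvge (y ++ [i])
          gcongr
        by_cases hy : y = x
        · rw [hy, show v x = c from if_pos rfl]
          exact ((min_le_right (f x) _).trans (opMin_le_pred (hy ▸ hy0) i)).trans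
            (hy ▸ hgc)
        · have : v y = envF f y := if_neg hy
          rw [this]
          exact ((hE y).2 hy0 i).trans hgc
    have : v x ≤ envF f x := le_envF hvconv hvle x
    rw [show v x = c from if_pos rfl] at this
    exact absurd this (not_le.mpr hcgt)
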